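/- Let X be a real Hilbert space, let C₁,…,C_m ⊆ X be nonempty closed convex sets with nonempty intersection C = C₁ ∩ ⋯ ∩ C_m, and let d ∈ X satisfy P_C(d) = 0. If y = (y₁,…,y_m) ∈ Xᵐ is a minimizer of v (i.e., v(y) ≤ v(y') for all y' ∈ Xᵐ), then d − Σ_{i=1}^m y_i = P_C(d) = 0, i.e., d − Σ_{i=1}^m y_i is the solution of the best approximation problem min_{x ∈ C} ½‖x − d‖². (Theorem 3.1(3).) -/

import Mathlib

open scoped RealInnerProductSpace

/-- The support function `δ*(z, D) = sup_{x ∈ D} ⟪z, x⟫`, with values in `EReal`. -/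
noncomputable def suppFn {X : Type*} [NormedAddCommGroup X] [InnerProductSpace ℝ X]
    (z : X) (D : Set X) : EReal :=
  ⨆ x ∈ D, ((⟪z, x⟫ : ℝ) : EReal)

lemma suppFn_le {X : Type*} [NormedAddCommGroup X] [InnerProductSpace ℝ X]
    {z : X} {D : Set X} {c : ℝ} (h : ∀ x ∈ D, ⟪z, x⟫ ≤ c) :
    suppFn z D ≤ (c : EReal) :=
  iSup₂_le fun x hx => EReal.coe_le_coe_iff.mpr (h x hx)

lemma le_suppFn {X : Type*} [NormedAddCommGroup X] [InnerProductSpace ℝ X]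
    {z : X} {D : Set X} {x : X} (hx : x ∈ D) :
    ((⟪z, x⟫ : ℝ) : EReal) ≤ suppFn z D :=
  le_iSup₂ (f := fun (x : X) (_ : x ∈ D) => ((⟪z, x⟫ : ℝ) : EReal)) x hx

lemma ereal_coe_sum {ι : Type*} (s : Finset ι) (f : ι → ℝ) :
    ((∑ i ∈ s, f i : ℝ) : EReal) = ∑ i ∈ s, ((f i : ℝ) : EReal) :=
  map_sum (⟨⟨Real.toEReal, EReal.coe_zero⟩, EReal.coe_add⟩ : ℝ →+ EReal) f s

/-- If `(t-1)a + (t-1)²b ≥ 0` for all `t ≥ 0` and `b ≥ 0`, then `a = 0`. -/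
lemma quad_aux {a b : ℝ} (hb : 0 ≤ b)
    (h : ∀ t : ℝ, 0 ≤ t → 0 ≤ (t - 1) * a + (t - 1) ^ 2 * b) : a = 0 := by
  have hD : (0 : ℝ) < b + a ^ 2 + 1 := by positivity
  have habs : |a| ≤ b + a ^ 2 + 1 := by
    nlinarith [abs_nonneg a, sq_abs a]
  have ht : (0 : ℝ) ≤ 1 - a / (b + a ^ 2 + 1) := by
    have h1 : a / (b + a ^ 2 + 1) ≤ 1 := by
      rw [div_le_one hD]
      calc a ≤ |a| := le_abs_self a
        _ ≤ b + a ^ 2 + 1 := habs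
    linarith
  have h0 := h (1 - a / (b + a ^ 2 + 1)) ht
  have hexpand : (1 - a / (b + a ^ 2 + 1) - 1) * a
      + (1 - a / (b + a ^ 2 + 1) - 1) ^ 2 * b
      = (a ^ 2 / (b + a ^ 2 + 1) ^ 2) * (b - (b + a ^ 2 + 1)) := by
    field_simp
    ring
  rw [hexpand] at h0
  have hq : (a ^ 2 / (b + a ^ 2 + 1) ^ 2) * (a ^ 2 + 1) ≤ 0 := by nlinarith
  have : a ^ 2 / (b + a ^ 2 + 1) ^ 2 ≤ 0 := by
    by_contra hc
    push_neg at hc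
    nlinarith
  have hge : 0 ≤ a ^ 2 / (b + a ^ 2 + 1) ^ 2 := by positivity
  have heq : a ^ 2 / (b + a ^ 2 + 1) ^ 2 = 0 := le_antisymm this hge
  have hden : ((b + a ^ 2 + 1) ^ 2 : ℝ) ≠ 0 := by positivity
  have ha2 : a ^ 2 = 0 := by
    rcases div_eq_zero_iff.mp heq with h' | h'
    · exact h'
    · exact absurd h' hden
  exact sq_eq_zero_iff.mp ha2

/-- If `t p + t² q ≥ 0` for all `t > 0` with `q ≥ 0`, then `p ≥ 0`. -/
lemma dir_aux {p q : ℝ} (hq : 0 ≤ q)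
    (h : ∀ t : ℝ, 0 < t → 0 ≤ t * p + t ^ 2 * q) : 0 ≤ p := by
  by_contra hc
  push_neg at hc
  have ht : (0 : ℝ) < -p / (2 * q + 1) := div_pos (by linarith) (by linarith)
  have h0 := h _ ht
  have hexpand : (-p / (2 * q + 1)) * p + (-p / (2 * q + 1)) ^ 2 * q
      = (p ^ 2 / (2 * q + 1) ^ 2) * (q - (2 * q + 1)) := by
    field_simp
    ring
  rw [hexpand] at h0
  have hp2 : 0 < p ^ 2 / (2 * q + 1) ^ 2 := div_pos (by nlinarith) (by positivity)
  nlinarith [mul_pos hp2 (show (0:ℝ) < q + 1 by linarith)]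

/-- Theorem 3.1(3): a dual minimizer recovers the primal solution of the best
approximation problem. -/
theorem dual_minimizer_gives_primal_BAP {X : Type*} [NormedAddCommGroup X]
    [InnerProductSpace ℝ X] [CompleteSpace X] {m : ℕ} (C : Fin m → Set X) (d : X)
    (hCne : ∀ i, (C i).Nonempty) (hCcl : ∀ i, IsClosed (C i)) (hCcv : ∀ i, Convex ℝ (C i))
    (hmem : (0 : X) ∈ ⋂ i, C i)
    (hproj : ∀ x ∈ ⋂ i, C i, ‖d - (0 : X)‖ ≤ ‖d - x‖)
    (y : Fin m → X)
    (hmin : ∀ y' : Fin m → X,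
      ((1 / 2 * ‖d - ∑ i, y i‖ ^ 2 : ℝ) : EReal) + ∑ i, suppFn (y i) (C i) ≤
      ((1 / 2 * ‖d - ∑ i, y' i‖ ^ 2 : ℝ) : EReal) + ∑ i, suppFn (y' i) (C i)) :
    d - ∑ i, y i = 0 := by
  have h0i : ∀ i, (0 : X) ∈ C i := fun i => Set.mem_iInter.mp hmem i
  -- each suppFn (y i) (C i) is nonnegative
  have hSnn : ∀ i, (0 : EReal) ≤ suppFn (y i) (C i) := by
    intro i
    have := le_suppFn (z := y i) (hx := h0i i)
    simpa using this
  -- suppFn 0 (C i) = 0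
  have hS0 : ∀ i, suppFn (0 : X) (C i) = 0 := by
    intro i
    refine le_antisymm (suppFn_le fun x hx => by simp) ?_
    have := le_suppFn (z := (0 : X)) (hx := h0i i)
    simpa using this
  -- comparing with y' = 0 : the sum of suppFn's is finite
  have hfin : ∀ i, suppFn (y i) (C i) ≠ ⊤ := by
    intro i
    have h := hmin 0
    simp only [Finset.sum_const_zero, Pi.zero_apply, hS0, Finset.sum_const, smul_zero,
      sub_zero, add_zero] at h
    have hsum : (∑ j, suppFn (y j) (C j)) ≤ ((1 / 2 * ‖d‖ ^ 2 : ℝ) : EReal) := by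
      refine le_trans ?_ h
      refine le_add_of_nonneg_left ?_
      exact_mod_cast (by positivity : (0 : ℝ) ≤ 1 / 2 * ‖d - ∑ i, y i‖ ^ 2)
    intro htop
    have hle : (⊤ : EReal) ≤ ∑ j, suppFn (y j) (C j) := by
      rw [← htop]
      exact Finset.single_le_sum (f := fun j => suppFn (y j) (C j))
        (fun j _ => hSnn j) (Finset.mem_univ i)
    exact EReal.coe_ne_top _ (top_le_iff.mp (hle.trans hsum))
  have hnbot : ∀ i, suppFn (y i) (C i) ≠ ⊥ := fun i =>
    fun hb => by simpa [hb] using (hSnn i)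
  -- real values of the support functions
  obtain ⟨T, hTeq⟩ : ∃ T : Fin m → ℝ, ∀ i, suppFn (y i) (C i) = ((T i : ℝ) : EReal) :=
    ⟨fun i => (suppFn (y i) (C i)).toReal,
      fun i => (EReal.coe_toReal (hfin i) (hnbot i)).symm⟩
  have hTnn : ∀ i, 0 ≤ T i := fun i => by
    have := hSnn i; rw [hTeq i] at this; exact_mod_cast this
  have hTub : ∀ i, ∀ x ∈ C i, ⟪y i, x⟫ ≤ T i := by
    intro i x hx
    have := (le_suppFn (z := y i) hx).trans_eq (hTeq i)
    exact_mod_cast this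
  -- the key real inequality from minimality
  have key : ∀ (y' : Fin m → X) (c : Fin m → ℝ),
      (∀ i, suppFn (y' i) (C i) ≤ ((c i : ℝ) : EReal)) →
      1 / 2 * ‖d - ∑ i, y i‖ ^ 2 + ∑ i, T i ≤ 1 / 2 * ‖d - ∑ i, y' i‖ ^ 2 + ∑ i, c i := by
    intro y' c hc
    have h := hmin y'
    have hL : ((1 / 2 * ‖d - ∑ i, y i‖ ^ 2 : ℝ) : EReal) + ∑ i, suppFn (y i) (C i)
        = (((1 / 2 * ‖d - ∑ i, y i‖ ^ 2 + ∑ i, T i : ℝ)) : EReal) := by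
      rw [EReal.coe_add, ereal_coe_sum]
      congr 1
      exact Finset.sum_congr rfl fun i _ => hTeq i
    have hR : ((1 / 2 * ‖d - ∑ i, y' i‖ ^ 2 : ℝ) : EReal) + ∑ i, suppFn (y' i) (C i)
        ≤ (((1 / 2 * ‖d - ∑ i, y' i‖ ^ 2 + ∑ i, c i : ℝ)) : EReal) := by
      rw [EReal.coe_add, ereal_coe_sum]
      exact add_le_add le_rfl (Finset.sum_le_sum fun i _ => hc i)
    have := (hL ▸ h).trans hR
    exact_mod_cast this
  set s : X := ∑ i, y i with hs
  set u : X := d - s with hu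
  -- Step 1 : ⟪u, s⟫ = ∑ T i  (scaling argument)
  have hst : ⟪u, s⟫ = ∑ i, T i := by
    have hscale : ∀ t : ℝ, 0 ≤ t →
        1 / 2 * ‖u‖ ^ 2 + ∑ i, T i ≤ 1 / 2 * ‖u + (1 - t) • s‖ ^ 2 + t * ∑ i, T i := by
      intro t ht
      have := key (fun i => t • y i) (fun i => t * T i) (fun i =>
        suppFn_le fun x hx => by
          rw [real_inner_smul_left]
          exact mul_le_mul_of_nonneg_left (hTub i x hx) ht)
      rw [← Finset.smul_sum, ← Finset.mul_sum] at this
      have hrw : d - t • s = u + (1 - t) • s := by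
        rw [hu]; module
      rw [← hs, hrw] at this
      exact this
    have hq : ∀ t : ℝ, 0 ≤ t →
        0 ≤ (t - 1) * ((∑ i, T i) - ⟪u, s⟫) + (t - 1) ^ 2 * (‖s‖ ^ 2 / 2) := by
      intro t ht
      have h := hscale t ht
      have hexp : ‖u + (1 - t) • s‖ ^ 2
          = ‖u‖ ^ 2 + 2 * ((1 - t) * ⟪u, s⟫) + (1 - t) ^ 2 * ‖s‖ ^ 2 := by
        rw [@norm_add_sq_real, real_inner_smul_right, norm_smul, mul_pow,
          Real.norm_eq_abs, sq_abs]
      rw [hexp] at h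
      nlinarith [h]
    have := quad_aux (by positivity) hq
    linarith
  -- Step 2 : u ∈ C j for every j
  have humem : ∀ j, u ∈ C j := by
    intro j
    by_contra hnot
    obtain ⟨f, r, hfa, hfu⟩ := geometric_hahn_banach_closed_point (hCcv j) (hCcl j) hnot
    set z : X := (InnerProductSpace.toDual ℝ X).symm f with hz
    have hzx : ∀ x : X, ⟪z, x⟫ = f x := fun x =>
      InnerProductSpace.toDual_symm_apply
    -- perturbation in direction z with step t > 0
    have hdir : ∀ t : ℝ, 0 < t → 1 / 2 * ‖u‖ ^ 2 ≤ 1 / 2 * ‖u - t • z‖ ^ 2 + t * r := by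
      intro t ht
      have hc : ∀ i, suppFn ((Function.update y j (y j + t • z)) i) (C i)
          ≤ (((Function.update T j (T j + t * r)) i : ℝ) : EReal) := by
        intro i
        rcases eq_or_ne i j with rfl | hij
        · simp only [Function.update_self]
          refine suppFn_le fun x hx => ?_
          rw [inner_add_left, real_inner_smul_left, hzx]
          have h1 := (hfa x hx).le
          have h2 := hTub i x hx
          nlinarith
        · simp only [Function.update_of_ne hij]
          exact (hTeq i).le
      have h := key _ _ hc
      have hsum1 : ∑ i, (Function.update y j (y j + t • z)) i = s + t • z := by
        rw [Finset.sum_update_of_mem (Finset.mem_univ j), hs,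
          ← Finset.add_sum_erase _ _ (Finset.mem_univ j), Finset.erase_eq]
        abel
      have hsum2 : ∑ i, (Function.update T j (T j + t * r)) i = (∑ i, T i) + t * r := by
        rw [Finset.sum_update_of_mem (Finset.mem_univ j),
          ← Finset.add_sum_erase _ _ (Finset.mem_univ j), Finset.erase_eq]
        ring
      rw [hsum1, hsum2] at h
      have hrw : d - (s + t • z) = u - t • z := by rw [hu]; abel
      rw [hrw] at h
      linarith
    have hfur : r < ⟪z, u⟫ := by rw [hzx]; exact hfu
    -- derive 0 ≤ r - ⟪z, u⟫, contradiction
    have hkey : ∀ t : ℝ, 0 < t →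
        0 ≤ t * (r - ⟪z, u⟫) + t ^ 2 * (‖z‖ ^ 2 / 2) := by
      intro t ht
      have h := hdir t ht
      have hexp : ‖u - t • z‖ ^ 2
          = ‖u‖ ^ 2 - 2 * (t * ⟪u, z⟫) + t ^ 2 * ‖z‖ ^ 2 := by
        rw [@norm_sub_sq_real, real_inner_smul_right, norm_smul, mul_pow,
          Real.norm_eq_abs, sq_abs]
      rw [hexp] at h
      have hsymm : ⟪u, z⟫ = ⟪z, u⟫ := real_inner_comm z u
      rw [hsymm] at h
      nlinarith [h]
    have := dir_aux (by positivity) hkey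
    linarith
  have humemI : u ∈ ⋂ i, C i := Set.mem_iInter.mpr humem
  -- Final step
  have hdist := hproj u humemI
  have hdu : d - u = s := by rw [hu]; abel
  rw [sub_zero, hdu] at hdist
  have hd : d = u + s := by rw [hu]; abel
  have hnormsq : ‖d‖ ^ 2 = ‖u‖ ^ 2 + 2 * ⟪u, s⟫ + ‖s‖ ^ 2 := by
    rw [hd, @norm_add_sq_real]
  have hTsum : 0 ≤ ∑ i, T i := Finset.sum_nonneg fun i _ => hTnn i
  have hds : ‖d‖ ^ 2 ≤ ‖s‖ ^ 2 := by
    nlinarith [hdist, norm_nonneg d, norm_nonneg s]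
  have hu0 : ‖u‖ ^ 2 ≤ 0 := by
    rw [hnormsq, hst] at hds
    linarith
  have : ‖u‖ = 0 := by nlinarith [norm_nonneg u, sq_nonneg ‖u‖]
  rw [hu] at this ⊢
  exact norm_eq_zero.mp this
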